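/- Floor-stacking lemma: Let G be a graph that is the disjoint union of floors G_1, ..., G_l, each isomorphic to a fixed graph H that admits a Hamiltonian cycle containing a distinguished edge e = {u,v} and another edge e' = {u',v'}, such that for each i the vertex u_i of floor i is adjacent (in G) to u'_{i+1} of floor i+1 and v_i is adjacent to v'_{i+1}. Then G admits a Hamiltonian cycle. -/

import Mathlib

open SimpleGraph Walk

/-- If a nodup-support walk ending at `a` contains the edge `s(a,b)`, it ends with it. -/
lemma split_aux {β : Type*} {G : SimpleGraph β} {a b : β} :
    ∀ {c : β} (W : G.Walk c a), W.support.Nodup → s(a, b) ∈ W.edges →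
      ∃ (W' : G.Walk c b) (h : G.Adj b a), W = W'.concat h := by
  intro c W
  induction W with
  | nil => intro _ he; simp at he
  | @cons c d _ h W2 ih =>
    intro hnd he
    rw [Walk.support_cons, List.nodup_cons] at hnd
    rw [Walk.edges_cons, List.mem_cons] at he
    rcases he with he | he
    · rw [Sym2.eq_iff] at he
      rcases he with ⟨rfl, rfl⟩ | ⟨rfl, rfl⟩
      · exact absurd W2.end_mem_support hnd.1
      · -- W2 : Walk a a with (cons).support nodup ⇒ W2 = nil
        cases W2 with
        | nil => exact ⟨Walk.nil, h, rfl⟩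
        | cons h3 W3 =>
          rw [Walk.support_cons, List.nodup_cons] at hnd
          exact absurd W3.end_mem_support hnd.2.1
    · obtain ⟨W', h', rfl⟩ := ih hnd.2 he
      exact ⟨Walk.cons h W', h', rfl⟩

/-- For a nonnil closed walk, membership in support equals membership in its tail. -/
lemma mem_support_iff_mem_tail {β : Type*} {G : SimpleGraph β} {t z : β}
    (w : G.Walk t t) (hw : ¬ w.Nil) : z ∈ w.support ↔ z ∈ w.support.tail := by
  constructor
  · intro hz
    rw [w.support_eq_cons, List.mem_cons] at hz
    rcases hz with rfl | hz
    · obtain ⟨x, h, q, rfl⟩ := Walk.not_nil_iff.mp hw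
      rw [Walk.support_cons, List.tail_cons]
      exact q.end_mem_support
    · exact hz
  · exact List.mem_of_mem_tail

/-- Splitting a cycle at an edge: removing edge `s(a,b)` from a cycle yields a
path from `a` to `b` with the same support and the remaining edges. -/
lemma cycle_split {β : Type*} [DecidableEq β] {G : SimpleGraph β} {x a b : β} (C : G.Walk x x)
    (hC : C.IsCycle) (hab : s(a, b) ∈ C.edges) :
    ∃ P : G.Walk a b, P.IsPath ∧ (∀ z, z ∈ P.support ↔ z ∈ C.support) ∧
      (∀ f, f ∈ P.edges ↔ f ∈ C.edges ∧ f ≠ s(a, b)) := by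
  have ha : a ∈ C.support := C.fst_mem_support_of_mem_edges hab
  set C' := C.rotate a ha with hC'def
  have hC' : C'.IsCycle := hC.rotate ha
  have hedges : ∀ f, f ∈ C'.edges ↔ f ∈ C.edges := fun f => (C.rotate_edges a ha).mem_iff
  have hsupp : ∀ z, z ∈ C'.support ↔ z ∈ C.support := by
    intro z
    rw [mem_support_iff_mem_tail _ hC'.not_nil, mem_support_iff_mem_tail _ hC.not_nil]
    exact (C.support_rotate a ha).mem_iff
  have hab' : s(a, b) ∈ C'.edges := (hedges _).mpr hab
  obtain ⟨d, h, W, hCW⟩ := Walk.not_nil_iff.mp hC'.not_nil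
  rw [hCW] at hC' hab' hedges hsupp
  rw [Walk.cons_isCycle_iff] at hC'
  rw [Walk.edges_cons, List.mem_cons] at hab'
  have hWnodup : W.support.Nodup := hC'.1.support_nodup
  rcases hab' with hab' | hab'
  · -- first edge is s(a,b)
    have hbd : b = d := by
      rw [Sym2.eq_iff] at hab'
      rcases hab' with ⟨-, rfl⟩ | ⟨rfl, rfl⟩
      · rfl
      · exact absurd h (G.irrefl)
    subst hbd
    refine ⟨W.reverse, hC'.1.reverse, ?_, ?_⟩
    · intro z
      rw [← hsupp z, Walk.support_reverse, List.mem_reverse, Walk.support_cons, List.mem_cons]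
      constructor
      · intro hz; exact Or.inr hz
      · rintro (rfl | hz)
        · exact W.end_mem_support
        · exact hz
    · intro f
      rw [← hedges f, Walk.edges_reverse, List.mem_reverse, Walk.edges_cons, List.mem_cons]
      constructor
      · intro hf
        refine ⟨Or.inr hf, fun hfe => ?_⟩
        rw [hfe] at hf; exact hC'.2 hf
      · rintro ⟨(hf | hf), hne⟩
        · exact absurd hf hne
        · exact hf
  · -- last edge is s(b,a)
    obtain ⟨W', h', rfl⟩ := split_aux W hWnodup hab'
    have hWnodup' := hWnodup
    rw [Walk.support_concat, List.nodup_append] at hWnodup'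
    have haW' : a ∉ W'.support := fun hmem => hWnodup'.2.2 _ hmem _ (List.mem_singleton.mpr rfl) rfl
    have hEnodup := Walk.edges_nodup_of_support_nodup hWnodup
    rw [Walk.edges_concat, List.concat_eq_append, List.nodup_append] at hEnodup
    have hbaW' : s(b, a) ∉ W'.edges := fun hmem => hEnodup.2.2 _ hmem _ (List.mem_singleton.mpr rfl) rfl
    have hadE : s(a, d) ∉ (W'.concat h').edges := hC'.2
    rw [Walk.edges_concat, List.concat_eq_append, List.mem_append] at hadE
    refine ⟨Walk.cons h W', ?_, ?_, ?_⟩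
    · rw [Walk.isPath_def, Walk.support_cons, List.nodup_cons]
      exact ⟨haW', hWnodup'.1⟩
    · intro z
      rw [← hsupp z, Walk.support_cons, Walk.support_cons, Walk.support_concat]
      simp only [List.mem_cons, List.mem_append, List.mem_singleton]
      tauto
    · intro f
      rw [← hedges f, Walk.edges_cons, Walk.edges_cons, Walk.edges_concat,
        List.concat_eq_append]
      simp only [List.mem_cons, List.mem_append, List.mem_singleton]
      constructor
      · rintro (rfl | hf)
        · refine ⟨Or.inl rfl, fun hfe => ?_⟩
          rw [hfe] at hadE
          rw [Walk.edges_concat, List.concat_eq_append, List.mem_append] at hab'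
          exact hadE hab' 
        · refine ⟨Or.inr (Or.inl hf), fun hfe => ?_⟩
          rw [hfe, Sym2.eq_swap] at hf
          exact hbaW' hf
      · rintro ⟨(rfl | hf | rfl | h0), hne⟩
        · exact Or.inl rfl
        · exact Or.inr hf
        · exact absurd Sym2.eq_swap hne
        · exact absurd h0 List.not_mem_nil

/-- Cycle compounding: two vertex-disjoint cycles, one containing `s(a,b)`, the other
`s(a',b')`, with cross edges `a-a'` and `b-b'`, merge into one cycle covering both
supports and keeping all edges of the second cycle except `s(a',b')`. -/
lemma surgery {β : Type*} [DecidableEq β] {G : SimpleGraph β} {x y a b a' b' : β}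
    (C : G.Walk x x) (D : G.Walk y y) (hC : C.IsCycle) (hD : D.IsCycle)
    (hab : s(a, b) ∈ C.edges) (hab' : s(a', b') ∈ D.edges)
    (hdisj : ∀ z, z ∈ C.support → z ∉ D.support)
    (haa' : G.Adj a a') (hbb' : G.Adj b b') :
    ∃ (E : G.Walk a a), E.IsCycle ∧
      (∀ z, z ∈ E.support ↔ z ∈ C.support ∨ z ∈ D.support) ∧
      (∀ f, f ∈ D.edges → f ≠ s(a', b') → f ∈ E.edges) := by
  obtain ⟨P, hP, hPsupp, hPedges⟩ := cycle_split C hC hab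
  obtain ⟨Q, hQ, hQsupp, hQedges⟩ := cycle_split D hD hab'
  have haC : a ∈ C.support := C.fst_mem_support_of_mem_edges hab
  have hbC : b ∈ C.support := C.snd_mem_support_of_mem_edges hab
  have ha'D : a' ∈ D.support := D.fst_mem_support_of_mem_edges hab'
  have hb'D : b' ∈ D.support := D.snd_mem_support_of_mem_edges hab'
  set W : G.Walk a' a := Q.append (Walk.cons hbb'.symm P.reverse) with hWdef
  have hWsupp : W.support = Q.support ++ P.reverse.support := by
    rw [hWdef, Walk.support_append, Walk.support_cons, List.tail_cons]
  have hWpath : W.IsPath := by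
    rw [Walk.isPath_def, hWsupp, List.nodup_append]
    refine ⟨hQ.support_nodup, (hP.reverse).support_nodup, ?_⟩
    intro z hzQ z' hzP hzz
    subst hzz
    rw [Walk.support_reverse, List.mem_reverse] at hzP
    exact hdisj z ((hPsupp z).mp hzP) ((hQsupp z).mp hzQ)
  have hWedges : W.edges = Q.edges ++ (s(b', b) :: P.reverse.edges) := by
    rw [hWdef, Walk.edges_append, Walk.edges_cons]
  have hnotmem : s(a, a') ∉ W.edges := by
    rw [hWedges]
    intro hmem
    rcases List.mem_append.mp hmem with hmem | hmem
    · have : a ∈ Q.support := Q.fst_mem_support_of_mem_edges hmem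
      exact hdisj a haC ((hQsupp a).mp this)
    · rcases List.mem_cons.mp hmem with hmem | hmem
      · rw [Sym2.eq_iff] at hmem
        rcases hmem with ⟨rfl, rfl⟩ | ⟨rfl, rfl⟩
        · exact hdisj a haC hb'D
        · exact (C.adj_of_mem_edges hab).ne rfl
      · rw [Walk.edges_reverse, List.mem_reverse] at hmem
        have : a' ∈ P.support := P.snd_mem_support_of_mem_edges hmem
        exact hdisj a' ((hPsupp a').mp this) ha'D
  refine ⟨Walk.cons haa' W, ?_, ?_, ?_⟩
  · rw [Walk.cons_isCycle_iff]
    exact ⟨hWpath, hnotmem⟩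
  · intro z
    rw [Walk.support_cons, List.mem_cons, hWsupp, List.mem_append,
      Walk.support_reverse, List.mem_reverse]
    constructor
    · rintro (rfl | hz | hz)
      · exact Or.inl haC
      · exact Or.inr ((hQsupp z).mp hz)
      · exact Or.inl ((hPsupp z).mp hz)
    · rintro (hz | hz)
      · exact Or.inr (Or.inr ((hPsupp z).mpr hz))
      · exact Or.inr (Or.inl ((hQsupp z).mpr hz))
  · intro f hfD hfne
    rw [Walk.edges_cons, List.mem_cons, hWedges, List.mem_append]
    exact Or.inr (Or.inl ((hQedges f).mpr ⟨hfD, hfne⟩))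

/-- Floor-stacking lemma: let `G` be a graph on `l` disjoint floors, each copy of a graph
`H` that admits a Hamiltonian cycle containing two distinct distinguished edges
`e = {u,v}` and `e' = {u',v'}`; each floor carries all edges of `H`, and between
consecutive floors `i`, `i+1` there are cross edges from `u_i` to `u'_{i+1}` and from
`v_i` to `v'_{i+1}`. Then `G` admits a Hamiltonian cycle. -/
theorem floor_stacking {α : Type*} [Fintype α] [DecidableEq α] (H : SimpleGraph α)
    (l : ℕ) (hl : 0 < l) (G : SimpleGraph (Fin l × α)) (u v u' v' : α)
    (hne : s(u, v) ≠ s(u', v'))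
    (hham : ∃ (x : α) (c : H.Walk x x), c.IsHamiltonianCycle ∧
      s(u, v) ∈ c.edges ∧ s(u', v') ∈ c.edges)
    (hfloor : ∀ (i : Fin l) (x y : α), H.Adj x y → G.Adj (i, x) (i, y))
    (hbridge : ∀ (i : ℕ) (hi : i + 1 < l),
      G.Adj ((⟨i, by omega⟩ : Fin l), u) ((⟨i + 1, hi⟩ : Fin l), u') ∧
      G.Adj ((⟨i, by omega⟩ : Fin l), v) ((⟨i + 1, hi⟩ : Fin l), v')) :
    ∃ (w : Fin l × α) (p : G.Walk w w), p.IsHamiltonianCycle := by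
  classical
  obtain ⟨x, c, hc, heuv, heuv'⟩ := hham
  -- the embedding of `H` as floor `i` of `G`
  let f : Fin l → (H →g G) := fun i => ⟨fun a => (i, a), fun h => hfloor i _ _ h⟩
  have finj : ∀ i : Fin l, Function.Injective (f i) := fun i a b h => congrArg Prod.snd h
  -- the floor cycles
  let D : (i : Fin l) → G.Walk (i, x) (i, x) := fun i => Walk.map (f i) c
  have hDcyc : ∀ i, (D i).IsCycle := fun i =>
    (Walk.map_isCycle_iff_of_injective (finj i)).mpr hc.isCycle
  have hDsupp : ∀ (i : Fin l) (z : Fin l × α), z ∈ (D i).support ↔ z.1 = i := by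
    intro i z
    rw [Walk.support_map, List.mem_map]
    constructor
    · rintro ⟨y, -, rfl⟩; rfl
    · rintro rfl
      exact ⟨z.2, hc.mem_support z.2, rfl⟩
  have hDedge : ∀ (i : Fin l) (s t : α), s(s, t) ∈ c.edges →
      s((i, s), (i, t)) ∈ (D i).edges := by
    intro i s t hst
    rw [Walk.edges_map, List.mem_map]
    exact ⟨s(s, t), hst, Sym2.map_pair_eq _ _ _⟩
  have hDne : ∀ i : Fin l, s(((i : Fin l), u), (i, v)) ≠ s((i, u'), (i, v')) := by
    intro i heq
    apply hne
    apply Sym2.map.injective (finj i)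
    rwa [Sym2.map_pair_eq, Sym2.map_pair_eq]
  -- induction over the number of stacked floors
  have key : ∀ k, ∀ hk : k < l, ∃ (w : Fin l × α) (p : G.Walk w w), p.IsCycle ∧
      (∀ z : Fin l × α, z ∈ p.support ↔ z.1.val ≤ k) ∧
      s(((⟨k, hk⟩ : Fin l), u), ((⟨k, hk⟩ : Fin l), v)) ∈ p.edges := by
    intro k
    induction k with
    | zero =>
      intro hk
      refine ⟨(⟨0, hk⟩, x), D ⟨0, hk⟩, hDcyc _, ?_, hDedge _ _ _ heuv⟩
      intro z
      rw [hDsupp]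
      constructor
      · intro h; rw [h]
      · intro h
        exact Fin.ext (Nat.le_zero.mp h)
    | succ n ih =>
      intro hk
      obtain ⟨w, p, hcyc, hsup, hedge⟩ := ih (by omega)
      set i1 : Fin l := ⟨n + 1, hk⟩ with hi1
      have hi1v : i1.val = n + 1 := rfl
      have hdisj : ∀ z, z ∈ p.support → z ∉ (D i1).support := by
        intro z hz hz'
        rw [hsup] at hz
        rw [hDsupp] at hz'
        have : z.1.val = n + 1 := by rw [hz']
        omega
      obtain ⟨E, hEcyc, hEsupp, hEedges⟩ := surgery p (D i1) hcyc (hDcyc i1)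
        hedge (hDedge i1 u' v' heuv') hdisj (hbridge n hk).1 (hbridge n hk).2
      refine ⟨_, E, hEcyc, ?_, hEedges _ (hDedge i1 u v heuv) (hDne i1)⟩
      intro z
      rw [hEsupp, hsup, hDsupp]
      constructor
      · rintro (h | h)
        · omega
        · rw [h]
      · intro h
        rcases Nat.lt_or_ge z.1.val (n + 1) with h' | h'
        · exact Or.inl (by omega)
        · exact Or.inr (Fin.ext (by omega))
  obtain ⟨w, p, hcyc, hsup, -⟩ := key (l - 1) (by omega)
  refine ⟨w, p, ?_⟩
  rw [Walk.isHamiltonianCycle_isCycle_and_isHamiltonian_tail]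
  refine ⟨hcyc, ?_⟩
  have htp : p.tail.IsPath := by
    apply Walk.IsPath.mk'
    rw [Walk.support_tail_of_not_nil p hcyc.not_nil]
    exact hcyc.support_nodup
  apply htp.isHamiltonian_of_mem
  intro z
  rw [Walk.support_tail_of_not_nil p hcyc.not_nil, ← mem_support_iff_mem_tail p hcyc.not_nil, hsup]
  have := z.1.isLt
  omega
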